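/- Let Q ∈ ℍ[t] be a monic univariate quaternionic polynomial with no nonconstant real polynomial factor, and let M ∈ ℝ[t] be a monic irreducible quadratic real polynomial dividing N(Q) with M ∤ Q (in ℂ[t]-coefficient sense). Then Q has a unique monic linear right factor t − h with N(t − h) = M; explicitly, if Q = TM + U with U = u₁t + u₀ the remainder of division by M, then u₁ ≠ 0 and h = −u₁⁻¹u₀. -/
import Mathlib

open Polynomial

/-- Coefficientwise quaternion conjugation of a univariate polynomial in ℍ[t]. -/
noncomputable def conj1 (Q : Polynomial (Quaternion ℝ)) : Polynomial (Quaternion ℝ) :=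
  Q.sum fun n a => C (star a) * X ^ n

lemma conj1_coeff (Q : Polynomial (Quaternion ℝ)) (n : ℕ) :
    (conj1 Q).coeff n = star (Q.coeff n) := by
  unfold conj1
  rw [Polynomial.sum, finset_sum_coeff]
  simp only [coeff_C_mul, coeff_X_pow, mul_ite, mul_one, mul_zero]
  rw [Finset.sum_ite_eq Q.support n (fun i => star (Q.coeff i))]
  by_cases h : n ∈ Q.support
  · simp [h]
  · simp [h, Polynomial.notMem_support_iff.mp h]

lemma conj1_add (P Q : Polynomial (Quaternion ℝ)) :
    conj1 (P + Q) = conj1 P + conj1 Q := by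
  apply Polynomial.ext; intro n
  simp [conj1_coeff, star_add]

lemma conj1_mul (P Q : Polynomial (Quaternion ℝ)) :
    conj1 (P * Q) = conj1 Q * conj1 P := by
  apply Polynomial.ext; intro n
  rw [conj1_coeff, coeff_mul, coeff_mul, star_sum, ← Finset.Nat.sum_antidiagonal_swap]
  apply Finset.sum_congr rfl
  intro p hp
  simp [conj1_coeff, star_mul]

lemma conj1_real (M : Polynomial ℝ) :
    conj1 (M.map (algebraMap ℝ (Quaternion ℝ))) = M.map (algebraMap ℝ (Quaternion ℝ)) := by
  apply Polynomial.ext; intro n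
  rw [conj1_coeff, coeff_map]
  exact Quaternion.star_coe _

lemma commute_real (M : Polynomial ℝ) (P : Polynomial (Quaternion ℝ)) :
    Commute (M.map (algebraMap ℝ (Quaternion ℝ))) P := by
  induction P using Polynomial.induction_on' with
  | add p q hp hq => exact hp.add_right hq
  | monomial n a =>
    rw [← C_mul_X_pow_eq_monomial]
    have hC : Commute (M.map (algebraMap ℝ (Quaternion ℝ))) (C a) := by
      show _ * _ = _ * _
      apply Polynomial.ext; intro m
      rw [coeff_mul_C, coeff_C_mul, coeff_map]
      exact Algebra.commutes (M.coeff m) a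
    exact hC.mul_right ((Polynomial.commute_X _).symm.pow_right n)

lemma dvd_middle (M : Polynomial ℝ) (A B : Polynomial (Quaternion ℝ)) :
    M.map (algebraMap ℝ (Quaternion ℝ)) ∣ A * (M.map (algebraMap ℝ (Quaternion ℝ)) * B) :=
  ⟨A * B, by rw [← mul_assoc, ← commute_real M A, mul_assoc]⟩

lemma conj1_linear (a b : Quaternion ℝ) :
    conj1 (C a * X + C b) = C (star a) * X + C (star b) := by
  apply Polynomial.ext; intro n
  simp only [conj1_coeff, coeff_add, coeff_C_mul, coeff_X, coeff_C, mul_ite, mul_one, mul_zero]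
  split_ifs <;> simp

lemma expand_lin (b c : Quaternion ℝ) :
    (X - C b) * (X - C c) = X * X - C c * X - C b * X + C (b * c) := by
  rw [sub_mul, mul_sub, mul_sub, Polynomial.X_mul_C, ← C_mul]
  abel

lemma lin_comm (a : Quaternion ℝ) :
    (X - C a) * (X - C (star a)) = (X - C (star a)) * (X - C a) := by
  rw [expand_lin, expand_lin, Quaternion.self_mul_star, Quaternion.star_mul_self]
  abel

/-- Let Q ∈ ℍ[t] be monic with no nonconstant real polynomial
factor, M a monic irreducible quadratic real polynomial with M ∣ N(Q) but
M ∤ Q. Then Q has a unique monic linear right factor t − h with N(t − h) = M;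
explicitly, if Q = T·M + (u₁t + u₀) is division with remainder by M, then
u₁ ≠ 0 and h = −u₁⁻¹u₀. -/
theorem unique_linear_right_factor (Q T : Polynomial (Quaternion ℝ))
    (M : Polynomial ℝ) (u₀ u₁ : Quaternion ℝ)
    (hmonic : Q.Monic)
    (hreal : ∀ r : Polynomial ℝ, r.map (algebraMap ℝ (Quaternion ℝ)) ∣ Q → r.degree ≤ 0)
    (hM : M.Monic) (hMirr : Irreducible M) (hMdeg : M.degree = 2)
    (hMdvd : M.map (algebraMap ℝ (Quaternion ℝ)) ∣ Q * conj1 Q)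
    (hMndvd : ¬ M.map (algebraMap ℝ (Quaternion ℝ)) ∣ Q)
    (hdiv : Q = T * M.map (algebraMap ℝ (Quaternion ℝ)) + (C u₁ * X + C u₀)) :
    u₁ ≠ 0 ∧
    (∃ S, Q = S * (X - C (-u₁⁻¹ * u₀))) ∧
    M.map (algebraMap ℝ (Quaternion ℝ)) =
      (X - C (-u₁⁻¹ * u₀)) * (X - C (star (-u₁⁻¹ * u₀))) ∧
    ∀ h : Quaternion ℝ,
      ((∃ S, Q = S * (X - C h)) ∧
        M.map (algebraMap ℝ (Quaternion ℝ)) = (X - C h) * (X - C (star h))) →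
      h = -u₁⁻¹ * u₀ := by
  set M' := M.map (algebraMap ℝ (Quaternion ℝ)) with hM'def
  set U : Polynomial (Quaternion ℝ) := C u₁ * X + C u₀ with hUdef
  have hconjU : conj1 U = C (star u₁) * X + C (star u₀) := conj1_linear u₁ u₀
  have hM'deg : M'.degree = 2 := by
    rw [hM'def, degree_map_eq_of_injective (RingHom.injective _)]; exact hMdeg
  have hM'nat : M'.natDegree = 2 := natDegree_eq_of_degree_eq_some hM'deg
  have hM'ne : M' ≠ 0 := by
    intro h; rw [h, degree_zero] at hM'deg; exact absurd hM'deg (by simp)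
  have hU : U = Q - T * M' := by rw [hdiv]; abel
  have hconjQ : conj1 Q = M' * conj1 T + conj1 U := by
    rw [hdiv, conj1_add, conj1_mul, conj1_real]
  have hUc : conj1 U = conj1 Q - M' * conj1 T := by rw [hconjQ]; abel
  have hdvdU : M' ∣ U * conj1 U := by
    have expand : U * conj1 U =
        Q * conj1 Q - Q * (M' * conj1 T) -
          ((T * M') * conj1 Q - (T * M') * (M' * conj1 T)) := by
      have e : U * conj1 U = (Q - T * M') * (conj1 Q - M' * conj1 T) := by
        rw [← hU, ← hUc]
      rw [e, sub_mul, mul_sub, mul_sub]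
    rw [expand]
    refine dvd_sub (dvd_sub hMdvd (dvd_middle M Q (conj1 T))) (dvd_sub ?_ ?_)
    · rw [mul_assoc]
      exact dvd_middle M T (conj1 Q)
    · rw [mul_assoc]
      exact dvd_middle M T (M' * conj1 T)
  -- u₁ ≠ 0
  have hu1 : u₁ ≠ 0 := by
    intro h0
    have hcU0 : conj1 U = C (star u₀) := by rw [hconjU, h0]; simp
    have hU0 : U = C u₀ := by rw [hUdef, h0]; simp
    obtain ⟨W, hW⟩ := hdvdU
    rw [hcU0, hU0, ← C_mul] at hW
    have hu0 : u₀ = 0 := by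
      have hprod : u₀ * star u₀ = 0 := by
        by_contra hne
        have hCne : (C (u₀ * star u₀) : Polynomial (Quaternion ℝ)) ≠ 0 := by
          simpa using hne
        have hWne : W ≠ 0 := by
          intro hz; rw [hz, mul_zero] at hW; exact hCne hW
        have hdeg := natDegree_mul hM'ne hWne
        rw [← hW, natDegree_C, hM'nat] at hdeg
        omega
      rcases mul_eq_zero.mp hprod with h | h
      · exact h
      · exact star_eq_zero.mp h
    have hQ : Q = T * M' := by rw [hdiv, hU0, hu0]; simp
    exact hMndvd ⟨T, hQ.trans (commute_real M T).eq.symm⟩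
  set a := -u₁⁻¹ * u₀ with hadef
  have hau : u₁ * a = -u₀ := by
    rw [hadef, neg_mul, mul_neg, ← mul_assoc, mul_inv_cancel₀ hu1, one_mul]
  have hUfac : C u₁ * (X - C a) = U := by
    rw [hUdef, mul_sub, ← C_mul, hau, C_neg, sub_neg_eq_add]
  have hstar : star a * star u₁ = -(star u₀) := by
    rw [← star_mul, hau, star_neg]
  have hcfac : (X - C (star a)) * C (star u₁) = conj1 U := by
    rw [hconjU, sub_mul, X_mul_C, ← C_mul, hstar, C_neg, sub_neg_eq_add]
  set P := (X - C a) * (X - C (star a)) with hPdef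
  have hPmonic : P.Monic := (monic_X_sub_C a).mul (monic_X_sub_C _)
  have hPnat : P.natDegree = 2 := by
    rw [hPdef, natDegree_mul (X_sub_C_ne_zero a) (X_sub_C_ne_zero _),
      natDegree_X_sub_C, natDegree_X_sub_C]
  have hUU : U * conj1 U = C u₁ * (P * C (star u₁)) := by
    rw [← hcfac, ← hUfac, hPdef, mul_assoc, mul_assoc]
  obtain ⟨W, hW⟩ := hdvdU
  have hUcoeff1 : U.coeff 1 = u₁ := by rw [hUdef]; simp
  have hUne : U ≠ 0 := by
    intro hz; apply hu1; rw [← hUcoeff1, hz, coeff_zero]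
  have hcUne : conj1 U ≠ 0 := by
    intro hz
    have hh := conj1_coeff U 1
    rw [hz, coeff_zero, hUcoeff1] at hh
    exact hu1 (star_eq_zero.mp hh.symm)
  have hUnat : U.natDegree = 1 := by rw [hUdef]; exact natDegree_linear hu1
  have hcUnat : (conj1 U).natDegree = 1 := by
    rw [hconjU]; exact natDegree_linear (star_ne_zero.mpr hu1)
  have hWne : W ≠ 0 := by
    intro hz; rw [hz, mul_zero] at hW
    exact (mul_ne_zero hUne hcUne) hW
  have hWnat : W.natDegree = 0 := by
    have h1 := natDegree_mul hUne hcUne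
    rw [hW, natDegree_mul hM'ne hWne, hUnat, hcUnat, hM'nat] at h1
    omega
  obtain ⟨c, hc⟩ := natDegree_eq_zero.mp hWnat
  have hW' : C u₁ * (P * C (star u₁)) = M' * C c := by rw [← hUU, hW, hc]
  have hM'coeff2 : M'.coeff 2 = 1 := by
    have hn : M.natDegree = 2 := natDegree_eq_of_degree_eq_some hMdeg
    rw [hM'def, coeff_map, ← hn, hM.coeff_natDegree, map_one]
  have hPcoeff2 : P.coeff 2 = 1 := by
    rw [← hPnat]; exact hPmonic.coeff_natDegree
  have e2 := congrArg (fun p : Polynomial (Quaternion ℝ) => p.coeff 2) hW'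
  simp only [coeff_C_mul, coeff_mul_C, hPcoeff2, hM'coeff2, one_mul, mul_one] at e2
  -- e2 : u₁ * star u₁ = c
  have hPM : P = M' := by
    have h1 : C u₁⁻¹ * (C u₁ * (P * C (star u₁))) * C ((star u₁)⁻¹) = P := by
      rw [← mul_assoc, ← C_mul, inv_mul_cancel₀ hu1, C_1, one_mul, mul_assoc, ← C_mul,
        mul_inv_cancel₀ (star_ne_zero.mpr hu1), C_1, mul_one]
    rw [hW'] at h1
    rw [← h1, ← mul_assoc, ← (commute_real M (C u₁⁻¹)).eq]
    rw [hM'def] at *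
    rw [mul_assoc, mul_assoc, ← C_mul, ← C_mul, ← e2]
    have harg : u₁⁻¹ * (u₁ * star u₁ * (star u₁)⁻¹) = 1 := by
      rw [mul_assoc, mul_inv_cancel₀ (star_ne_zero.mpr hu1), mul_one, inv_mul_cancel₀ hu1]
    rw [harg, C_1, mul_one]
  refine ⟨hu1, ?_, hPM.symm, ?_⟩
  · -- existence
    have hM'fac2 : M' = (X - C (star a)) * (X - C a) := hPM.symm.trans (lin_comm a)
    refine ⟨T * (X - C (star a)) + C u₁, ?_⟩
    rw [hdiv, ← hUfac, hM'fac2, add_mul, mul_assoc]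
  · -- uniqueness
    intro g hgg
    obtain ⟨⟨S, hS⟩, hg⟩ := hgg
    have hg2 : M' = (X - C (star g)) * (X - C g) := hg.trans (lin_comm g)
    have hfac : U = (S - T * (X - C (star g))) * (X - C g) := by
      rw [sub_mul, mul_assoc, ← hg2, ← hS]
      exact hU
    have hW2ne : S - T * (X - C (star g)) ≠ 0 := by
      intro hz; rw [hz, zero_mul] at hfac; exact hUne hfac
    have hW2nat : (S - T * (X - C (star g))).natDegree = 0 := by
      have hh := natDegree_mul hW2ne (X_sub_C_ne_zero g)
      rw [← hfac, hUnat, natDegree_X_sub_C] at hh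
      omega
    obtain ⟨c₂, hc₂⟩ := natDegree_eq_zero.mp hW2nat
    rw [← hc₂] at hfac
    rw [hUdef] at hfac
    have e1 := congrArg (fun p : Polynomial (Quaternion ℝ) => p.coeff 1) hfac
    have e0 := congrArg (fun p : Polynomial (Quaternion ℝ) => p.coeff 0) hfac
    simp at e1 e0
    -- e1 : u₁ = c₂, e0 : u₀ = -(c₂ * g)
    have hc2ne : c₂ ≠ 0 := by rw [← e1]; exact hu1
    rw [hadef, e0, e1, neg_mul, mul_neg, neg_neg, ← mul_assoc,
      inv_mul_cancel₀ hc2ne, one_mul]
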